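/- arXiv:1905.11322 — 2 statements merged into one kernel-verified Lean document; each statement's English description precedes it below -/
import Mathlib

section
/- Let α be the real root of x^3 - x - 1 and a = α(α+1)/(3α^2 - 1). Then α and 2a are multiplicatively independent, i.e., if α^m · (2a)^n = 1 for integers m, n, then m = n = 0. -/
/-- Norm form for `p + q·α + r·α²` in `ℚ(α)`, `α³ = α + 1`. -/
def nrm (p q r : ℚ) : ℚ :=
  p * ((p + r) * (p + r) - q * (q + r)) - r * (q * (p + r) - r * (q + r)) +
    q * (q * q - r * (p + r))

lemma nrm_mul (p q r P Q R : ℚ) :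
    nrm (p * P + q * R + r * Q) (p * Q + q * P + q * R + r * Q + r * R)
      (p * R + q * Q + r * P + r * R) = nrm p q r * nrm P Q R := by
  simp only [nrm]; ring

lemma no_rat_root (q : ℚ) : q ^ 3 - q - 1 ≠ 0 := by
  intro h
  have hq3 : q ^ 3 = q + 1 := by linarith
  set n : ℤ := q.num with hn
  set d : ℤ := (q.den : ℤ) with hd
  have hdz : d ≠ 0 := by
    rw [hd]; exact_mod_cast q.den_nz
  have hd0 : (d : ℚ) ≠ 0 := by exact_mod_cast hdz
  have hq : (q : ℚ) = (n : ℚ) / (d : ℚ) := by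
    rw [hn, hd]; exact_mod_cast (Rat.num_div_den q).symm
  have hint : (n : ℚ) ^ 3 * d = (n + d) * d ^ 3 := by
    have h2 := hq3
    rw [hq] at h2
    field_simp at h2
    linear_combination (d : ℚ) * h2
  have hintZ : n ^ 3 * d = (n + d) * d ^ 3 := by exact_mod_cast hint
  have hcancel : n ^ 3 = (n + d) * d ^ 2 := by
    apply mul_right_cancel₀ hdz
    linear_combination hintZ
  have hdvd : d ∣ n ^ 3 := ⟨(n + d) * d, by linear_combination hcancel⟩
  have hdvdN : q.den ∣ n.natAbs ^ 3 := by
    have h1 := Int.natAbs_dvd_natAbs.mpr hdvd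
    rwa [Int.natAbs_pow, hd, Int.natAbs_natCast] at h1
  have hcop : Nat.Coprime q.den (n.natAbs ^ 3) := (q.reduced.symm).pow_right 3
  have hden1 : q.den = 1 := Nat.Coprime.eq_one_of_dvd hcop hdvdN
  have hq' : (q : ℚ) = (n : ℚ) := by rw [hq, hd, hden1]; simp
  have hnZ : n ^ 3 = n + 1 := by
    have h2 := hq3; rw [hq'] at h2; exact_mod_cast h2
  have hu : n * (n ^ 2 - 1) = 1 := by linear_combination hnZ
  have : n = 1 ∨ n = -1 := Int.isUnit_iff.mp (IsUnit.of_mul_eq_one _ hu)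
  rcases this with h1 | h1 <;> rw [h1] at hnZ <;> norm_num at hnZ

lemma not_rat (α : ℝ) (hα : α ^ 3 - α - 1 = 0) (t : ℚ) : α ≠ (t : ℝ) := by
  intro h
  rw [h] at hα
  have : ((t ^ 3 - t - 1 : ℚ) : ℝ) = 0 := by push_cast; linarith
  exact no_rat_root t (by exact_mod_cast this)

lemma indep (α : ℝ) (hα : α ^ 3 - α - 1 = 0) (p q r : ℚ)
    (h : (p : ℝ) + q * α + r * α ^ 2 = 0) : p = 0 ∧ q = 0 ∧ r = 0 := by
  by_cases hr : r = 0
  · subst hr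
    push_cast at h
    by_cases hq : q = 0
    · subst hq
      push_cast at h
      refine ⟨by exact_mod_cast (by linarith : (p : ℝ) = 0), rfl, rfl⟩
    · exfalso
      apply not_rat α hα (-p / q)
      have hq' : (q : ℝ) ≠ 0 := by exact_mod_cast hq
      push_cast
      rw [eq_div_iff hq']
      linarith
  · exfalso
    have hr' : (r : ℝ) ≠ 0 := by exact_mod_cast hr
    set B : ℚ := q / r with hB
    set C : ℚ := p / r with hC
    have h2 : α ^ 2 + (B : ℝ) * α + (C : ℝ) = 0 := by
      rw [hB, hC]; push_cast
      field_simp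
      linear_combination h
    have key : ((B ^ 2 - C - 1 : ℚ) : ℝ) * α = ((1 - B * C : ℚ) : ℝ) := by
      push_cast
      linear_combination hα - (α - (B : ℝ)) * h2
    by_cases hBC : B ^ 2 - C - 1 = 0
    · have h1 : ((1 - B * C : ℚ) : ℝ) = 0 := by
        rw [← key, hBC]; push_cast; ring
      have h1' : B * C = 1 := by
        have : (1 - B * C : ℚ) = 0 := by exact_mod_cast h1
        linarith
      have hCval : C = B ^ 2 - 1 := by linarith
      have : B ^ 3 - B - 1 = 0 := by
        rw [hCval] at h1'; linear_combination h1'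
      exact no_rat_root B this
    · apply not_rat α hα ((1 - B * C) / (B ^ 2 - C - 1))
      have hBC' : ((B ^ 2 - C - 1 : ℚ) : ℝ) ≠ 0 := by exact_mod_cast hBC
      push_cast
      push_cast at key hBC'
      rw [eq_div_iff hBC']
      linarith [key]

theorem mult_indep (α a : ℝ) (hα : α ^ 3 - α - 1 = 0)
    (ha : a = α * (α + 1) / (3 * α ^ 2 - 1)) :
    ∀ m n : ℤ, α ^ m * (2 * a) ^ n = 1 → m = 0 ∧ n = 0 := by
  intro m n h
  have hα1 : 1 < α := by nlinarith [sq_nonneg α, sq_nonneg (α - 1), sq_nonneg (α + 1)]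
  have hα0 : 0 < α := by linarith
  have h3 : (3 * α ^ 2 - 1) ≠ 0 := by nlinarith
  have hval : (2 : ℝ) * a = 6 / 23 + 2 / 23 * α + 14 / 23 * α ^ 2 := by
    rw [ha, ← mul_div_assoc, eq_comm]
    rw [eq_div_iff h3, eq_comm]
    linear_combination (-(42 * α + 6) / 23) * hα
  have ha0 : 0 < 2 * a := by nlinarith [hval]
  let Rep : ℝ → ℚ → Prop := fun x t =>
    ∃ p q r : ℚ, x = (p : ℝ) + q * α + r * α ^ 2 ∧ nrm p q r = t
  have rep_mul : ∀ x y s t, Rep x s → Rep y t → Rep (x * y) (s * t) := by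
    rintro x y s t ⟨p, q, r, hx, hs⟩ ⟨P, Q, R, hy, ht⟩
    refine ⟨p * P + q * R + r * Q, p * Q + q * P + q * R + r * Q + r * R,
      p * R + q * Q + r * P + r * R, ?_, by rw [nrm_mul, hs, ht]⟩
    rw [hx, hy]; push_cast
    linear_combination ((q : ℝ) * R + r * Q + r * R * α) * hα
  have rep_one : Rep 1 1 := ⟨1, 0, 0, by push_cast; ring, by simp [nrm]⟩
  have rep_pow : ∀ x s, Rep x s → ∀ k : ℕ, Rep (x ^ k) (s ^ k) := by
    intro x s hx k
    induction k with
    | zero => simpa using rep_one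
    | succ k ih =>
      rw [pow_succ, pow_succ]
      exact rep_mul _ _ _ _ ih hx
  have rep_alpha : Rep α 1 := ⟨0, 1, 0, by push_cast; ring, by simp [nrm]⟩
  have rep_alpha_inv : Rep α⁻¹ 1 := by
    refine ⟨-1, 0, 1, ?_, by simp [nrm]⟩
    have hprod : (α ^ 2 - 1) * α = 1 := by linear_combination hα
    rw [← eq_inv_of_mul_eq_one_left hprod]
    push_cast; ring
  have rep_2a : Rep (2 * a) (8 / 23) := by
    refine ⟨6 / 23, 2 / 23, 14 / 23, ?_, by norm_num [nrm]⟩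
    rw [hval]; push_cast; ring
  have rep_2a_inv : Rep (2 * a)⁻¹ (23 / 8) := by
    refine ⟨2, 1, -(3 / 2), ?_, by norm_num [nrm]⟩
    have hmul : ((2 : ℝ) + α - 3 / 2 * α ^ 2) * (2 * a) = 1 := by
      rw [hval]
      linear_combination ((11 / 23 : ℝ) - 21 / 23 * α) * hα
    rw [← eq_inv_of_mul_eq_one_left hmul]
    push_cast; ring
  have rep_alpha_z : ∀ k : ℤ, Rep (α ^ k) 1 := by
    intro k
    cases k with
    | ofNat k => simpa using rep_pow _ _ rep_alpha k
    | negSucc k =>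
      rw [zpow_negSucc, ← inv_pow]
      simpa using rep_pow _ _ rep_alpha_inv (k + 1)
  have rep_2a_z : ∀ k : ℤ, Rep ((2 * a) ^ k) ((8 / 23) ^ k) := by
    intro k
    cases k with
    | ofNat k =>
      have := rep_pow _ _ rep_2a k
      simpa [zpow_natCast] using this
    | negSucc k =>
      rw [zpow_negSucc, ← inv_pow]
      have hrep := rep_pow _ _ rep_2a_inv (k + 1)
      have heq : ((8 / 23 : ℚ)) ^ (Int.negSucc k) = (23 / 8) ^ (k + 1) := by
        rw [zpow_negSucc, ← inv_pow]
        norm_num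
      rwa [heq]
  have rep_total : Rep 1 ((8 / 23) ^ n) := by
    have := rep_mul _ _ _ _ (rep_alpha_z m) (rep_2a_z n)
    rwa [h, one_mul] at this
  obtain ⟨p, q, r, hv, hnrm⟩ := rep_total
  have hzero : ((p - 1 : ℚ) : ℝ) + q * α + r * α ^ 2 = 0 := by push_cast; linarith [hv]
  obtain ⟨hp, hq, hr⟩ := indep α hα _ _ _ hzero
  have hp1 : p = 1 := by linarith [sub_eq_zero.mp (by exact_mod_cast hp)]
  rw [hp1, hq, hr] at hnrm
  have hnrm1 : ((8 : ℚ) / 23) ^ n = 1 := by rw [← hnrm]; norm_num [nrm]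
  have hn0 : n = 0 :=
    (zpow_eq_one_iff_right₀ (a := (8 : ℚ) / 23) (by norm_num) (by norm_num)).mp hnrm1
  subst hn0
  simp only [zpow_zero, mul_one] at h
  have hm0 : m = 0 :=
    (zpow_eq_one_iff_right₀ (a := α) (le_of_lt hα0) (ne_of_gt hα1)).mp h
  exact ⟨hm0, rfl⟩
end

section
/- Suppose k₁ < k₂ are positive integers, and x_{k_i} = P(n_i) + P(m_i) for i = 1, 2 with 3 ≤ m_i < n_i, where x_k = (δ^k + σ^k)/2 comes from a Pell equation x² - dy² = ±1. Then n₁ < n₂ + 4. -/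
def padovan : ℕ → ℕ
  | 0 => 0
  | 1 => 1
  | 2 => 1
  | n + 3 => padovan (n + 1) + padovan n

lemma pad_pos : ∀ n, 1 ≤ padovan (n + 1)
  | 0 => le_refl 1
  | 1 => le_refl 1
  | 2 => le_refl 1
  | n + 3 => by
      show 1 ≤ padovan (n + 2) + padovan (n + 1)
      have := pad_pos n
      omega

lemma pad_le2 : ∀ n, padovan n ≤ padovan (n + 2)
  | 0 => by decide
  | n + 1 => by
      show padovan (n + 1) ≤ padovan (n + 1) + padovan n
      omega

lemma pad_mono : ∀ n, padovan (n + 1) ≤ padovan (n + 2)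
  | 0 => le_refl 1
  | 1 => le_refl 1
  | n + 2 => by
      show padovan (n + 1) + padovan n ≤ padovan (n + 2) + padovan (n + 1)
      have := pad_le2 n
      omega

lemma pad_mono_le {m n : ℕ} (hm : 1 ≤ m) (h : m ≤ n) : padovan m ≤ padovan n := by
  induction n, h using Nat.le_induction with
  | base => exact le_refl _
  | succ n hn ih =>
    refine ih.trans ?_
    obtain ⟨j, rfl⟩ := Nat.exists_eq_add_of_le' (hm.trans hn)
    exact pad_mono j

lemma pell_step (δ σ : ℝ) (hδ : 1 + Real.sqrt 2 ≤ δ)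
    (hσ : δ * σ = 1 ∨ δ * σ = -1) (k : ℕ) (hk : 1 ≤ k) :
    (δ ^ k + σ ^ k) / 2 < (δ ^ (k + 1) + σ ^ (k + 1)) / 2 := by
  have hs2 : (0:ℝ) < Real.sqrt 2 := Real.sqrt_pos.2 (by norm_num)
  have hsq : Real.sqrt 2 ^ 2 = 2 := Real.sq_sqrt (by norm_num)
  have hδ1 : 1 < δ := by linarith
  have habs : |δ| * |σ| = 1 := by
    rw [← abs_mul]
    rcases hσ with h | h <;> rw [h] <;> simp
  have hδa : |δ| = δ := abs_of_pos (by linarith)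
  have hσ1 : |σ| ≤ 1 := by
    rw [hδa] at habs
    nlinarith [abs_nonneg σ]
  have hA : δ * (δ - 1) ≤ δ ^ k * (δ - 1) :=
    mul_le_mul_of_nonneg_right (le_self_pow₀ hδ1.le (by omega)) (by linarith)
  have hA2 : 2 < δ * (δ - 1) := by nlinarith
  have hBk : |σ| ^ k ≤ 1 := pow_le_one₀ (abs_nonneg σ) hσ1
  have hB : |σ ^ k * (σ - 1)| ≤ 2 := by
    rw [abs_mul, abs_pow]
    have h1 : |σ - 1| ≤ |σ| + 1 := (abs_sub σ 1).trans (by simp)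
    calc |σ| ^ k * |σ - 1| ≤ 1 * (|σ| + 1) :=
          mul_le_mul hBk h1 (abs_nonneg _) zero_le_one
      _ ≤ 2 := by linarith
  have hB' : -2 ≤ σ ^ k * (σ - 1) := by
    have := neg_abs_le (σ ^ k * (σ - 1)); linarith
  rw [pow_succ, pow_succ]
  nlinarith [hA, hA2, hB']

lemma pell_lt (δ σ : ℝ) (hδ : 1 + Real.sqrt 2 ≤ δ)
    (hσ : δ * σ = 1 ∨ δ * σ = -1) {k₁ k₂ : ℕ} (hk₁ : 1 ≤ k₁) (hk : k₁ < k₂) :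
    (δ ^ k₁ + σ ^ k₁) / 2 < (δ ^ k₂ + σ ^ k₂) / 2 := by
  induction k₂, hk using Nat.le_induction with
  | base => exact pell_step δ σ hδ hσ k₁ hk₁
  | succ n hn ih => exact ih.trans (pell_step δ σ hδ hσ n (by omega))

theorem pell_padovan_n1_lt (δ σ : ℝ)
    (hδ : 1 + Real.sqrt 2 ≤ δ) (hσ : δ * σ = 1 ∨ δ * σ = -1)
    (k₁ k₂ n₁ m₁ n₂ m₂ : ℕ) (hk₁ : 1 ≤ k₁) (hk : k₁ < k₂)
    (hm₁ : 3 ≤ m₁) (hmn₁ : m₁ < n₁) (hm₂ : 3 ≤ m₂) (hmn₂ : m₂ < n₂)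
    (heq₁ : (δ ^ k₁ + σ ^ k₁) / 2 = (padovan n₁ + padovan m₁ : ℝ))
    (heq₂ : (δ ^ k₂ + σ ^ k₂) / 2 = (padovan n₂ + padovan m₂ : ℝ)) :
    n₁ < n₂ + 4 := by
  by_contra hc
  push_neg at hc
  obtain ⟨j, rfl⟩ : ∃ j, n₂ = j + 1 := ⟨n₂ - 1, by omega⟩
  have key : padovan (j + 1) + padovan m₂ < padovan n₁ + padovan m₁ := by
    have h1 : padovan m₂ ≤ padovan j := pad_mono_le (by omega) (by omega)
    have e1 : padovan (j + 3) = padovan (j + 1) + padovan j := rfl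
    have e2 : padovan (j + 5) = padovan (j + 3) + padovan (j + 2) := rfl
    have h2 : 1 ≤ padovan (j + 2) := pad_pos (j + 1)
    have h3 : padovan (j + 5) ≤ padovan n₁ := pad_mono_le (by omega) (by omega)
    omega
  have hlt := pell_lt δ σ hδ hσ hk₁ hk
  rw [heq₁, heq₂] at hlt
  have : (padovan n₁ + padovan m₁ : ℕ) < padovan (j + 1) + padovan m₂ := by
    exact_mod_cast hlt
  omega
end
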